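/- For every positive integer t, with a = 2/(3t+3+sqrt(9t^2+18t-3)) and b = 1/3 - t*a, the identity 3*lambda(K_{3(t+1)}^{3-}) = binom(3t-1,2)*a^2 + 3*b^2 + 3*(3t-1)*a*b holds. -/

import Mathlib

open Finset

namespace KminusAux

set_option linter.unusedSectionVars false

variable {ι : Type*} [DecidableEq ι]

/-- elementary symmetric polynomial over a finset -/
def esym (k : ℕ) (s : Finset ι) (x : ι → ℝ) : ℝ :=
  ∑ E ∈ s.powersetCard k, ∏ i ∈ E, x i

lemma esym_zero (s : Finset ι) (x : ι → ℝ) : esym 0 s x = 1 := by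
  simp [esym, Finset.powersetCard_zero]

lemma esym_succ_empty (k : ℕ) (x : ι → ℝ) : esym (k+1) (∅ : Finset ι) x = 0 := by
  rw [esym]
  have : Finset.powersetCard (k+1) (∅ : Finset ι) = ∅ := by
    rw [Finset.powersetCard_eq_empty]; simp
  rw [this, Finset.sum_empty]

lemma esym_one (s : Finset ι) (x : ι → ℝ) : esym 1 s x = ∑ i ∈ s, x i := by
  rw [esym, Finset.powersetCard_one, Finset.sum_map]
  simp

lemma esym_insert (k : ℕ) {a : ι} {s : Finset ι} (h : a ∉ s) (x : ι → ℝ) :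
    esym (k+1) (insert a s) x = esym (k+1) s x + x a * esym k s x := by
  rw [esym, Finset.powersetCard_succ_insert h]
  rw [Finset.sum_union]
  · congr 1
    rw [Finset.sum_image]
    · simp only [esym, Finset.mul_sum]
      refine Finset.sum_congr rfl fun E hE => ?_
      rw [Finset.mem_powersetCard] at hE
      rw [Finset.prod_insert (fun hc => h (hE.1 hc))]
    · intro E hE F hF hEF
      rw [Finset.mem_coe, Finset.mem_powersetCard] at hE
      rw [Finset.mem_coe, Finset.mem_powersetCard] at hF
      have hae : a ∉ E := fun hc => h (hE.1 hc)
      have haf : a ∉ F := fun hc => h (hF.1 hc)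
      rw [← Finset.erase_insert hae, ← Finset.erase_insert haf, hEF]
  · rw [Finset.disjoint_left]
    intro E hE hE'
    rw [Finset.mem_powersetCard] at hE
    rw [Finset.mem_image] at hE'
    obtain ⟨F, _, rfl⟩ := hE'
    exact h (hE.1 (Finset.mem_insert_self a F))

lemma esym_one_union (s : Finset ι) (x : ι → ℝ) (u : Finset ι) (h : Disjoint s u) :
    esym 1 (s ∪ u) x = esym 1 s x + esym 1 u x := by
  rw [esym_one, esym_one, esym_one, Finset.sum_union h]

lemma esym_two_union (s : Finset ι) (x : ι → ℝ) (u : Finset ι) :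
    Disjoint s u →
    esym 2 (s ∪ u) x = esym 2 s x + esym 1 s x * esym 1 u x + esym 2 u x := by
  induction u using Finset.induction_on with
  | empty => intro _; simp [esym_succ_empty]
  | @insert a u hau ih =>
    intro hdisj
    have has : a ∉ s := fun hc => (Finset.disjoint_right.1 hdisj) (Finset.mem_insert_self a u) hc
    have hdisj' : Disjoint s u := hdisj.mono_right (Finset.subset_insert a u)
    have hasu : a ∉ s ∪ u := by
      simp only [Finset.mem_union, not_or]; exact ⟨has, hau⟩
    have hins : s ∪ insert a u = insert a (s ∪ u) := by
      ext i; simp [Finset.mem_union, Finset.mem_insert, or_assoc, or_left_comm]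
    rw [hins, esym_insert 1 hasu x, esym_insert 1 hau x, esym_insert 0 hau x,
      ih hdisj', esym_one_union s x u hdisj', esym_zero]
    ring

lemma esym_three_union (s : Finset ι) (x : ι → ℝ) (u : Finset ι) :
    Disjoint s u →
    esym 3 (s ∪ u) x = esym 3 s x + esym 2 s x * esym 1 u x + esym 1 s x * esym 2 u x
      + esym 3 u x := by
  induction u using Finset.induction_on with
  | empty => intro _; simp [esym_succ_empty]
  | @insert a u hau ih =>
    intro hdisj
    have has : a ∉ s := fun hc => (Finset.disjoint_right.1 hdisj) (Finset.mem_insert_self a u) hc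
    have hdisj' : Disjoint s u := hdisj.mono_right (Finset.subset_insert a u)
    have hasu : a ∉ s ∪ u := by
      simp only [Finset.mem_union, not_or]; exact ⟨has, hau⟩
    have hins : s ∪ insert a u = insert a (s ∪ u) := by
      ext i; simp [Finset.mem_union, Finset.mem_insert, or_assoc, or_left_comm]
    rw [hins, esym_insert 2 hasu x, esym_insert 2 hau x, esym_insert 1 hau x,
      esym_insert 0 hau x, ih hdisj', esym_two_union s x u hdisj', esym_zero]
    ring

lemma esym_const (k : ℕ) (s : Finset ι) (x : ι → ℝ) (c : ℝ) (h : ∀ i ∈ s, x i = c) :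
    esym k s x = (s.card.choose k : ℝ) * c ^ k := by
  rw [esym, ← Finset.card_powersetCard]
  rw [Finset.sum_congr rfl (fun E hE => ?_), Finset.sum_const, nsmul_eq_mul]
  rw [Finset.mem_powersetCard] at hE
  rw [Finset.prod_congr rfl (fun i hi => h i (hE.1 hi)), Finset.prod_const, hE.2]

lemma esym_two_eq (s : Finset ι) (x : ι → ℝ) :
    2 * esym 2 s x = (∑ i ∈ s, x i) ^ 2 - ∑ i ∈ s, (x i) ^ 2 := by
  induction s using Finset.induction_on with
  | empty => simp [esym_succ_empty]
  | @insert a s ha ih =>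
    rw [esym_insert 1 ha x, esym_one, Finset.sum_insert ha, Finset.sum_insert ha]
    linear_combination ih

lemma esym_three_eq (s : Finset ι) (x : ι → ℝ) :
    6 * esym 3 s x = (∑ i ∈ s, x i) ^ 3 - 3 * (∑ i ∈ s, x i) * (∑ i ∈ s, (x i) ^ 2)
      + 2 * ∑ i ∈ s, (x i) ^ 3 := by
  induction s using Finset.induction_on with
  | empty => simp [esym_succ_empty]
  | @insert a s ha ih =>
    rw [esym_insert 2 ha x, Finset.sum_insert ha, Finset.sum_insert ha, Finset.sum_insert ha]
    linear_combination ih + 3 * x a * esym_two_eq s x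

lemma esym_two_le (s : Finset ι) (x : ι → ℝ) :
    2 * (s.card : ℝ) * esym 2 s x ≤ ((s.card : ℝ) - 1) * (∑ i ∈ s, x i) ^ 2 := by
  have h1 : (∑ i ∈ s, x i) ^ 2 ≤ (s.card : ℝ) * ∑ i ∈ s, (x i) ^ 2 :=
    sq_sum_le_card_mul_sum_sq
  have h2 : 2 * (s.card : ℝ) * esym 2 s x
      = (s.card : ℝ) * (∑ i ∈ s, x i) ^ 2 - (s.card : ℝ) * ∑ i ∈ s, (x i) ^ 2 := by
    linear_combination (s.card : ℝ) * esym_two_eq s x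
  linarith

lemma amgm3 {p q r : ℝ} (hp : 0 ≤ p) (hq : 0 ≤ q) (hr : 0 ≤ r) :
    27 * (p * q * r) ≤ (p + q + r) ^ 3 := by
  nlinarith [mul_nonneg hp (sq_nonneg (q - r)), mul_nonneg hq (sq_nonneg (p - r)),
    mul_nonneg hr (sq_nonneg (p - q)),
    mul_nonneg (add_nonneg (add_nonneg hp hq) hr)
      (add_nonneg (add_nonneg (sq_nonneg (p - q)) (sq_nonneg (q - r))) (sq_nonneg (p - r)))]

lemma esym_three_le (s : Finset ι) (x : ι → ℝ) (hm : 3 ≤ s.card)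
    (hx : ∀ i ∈ s, 0 ≤ x i) :
    6 * (s.card : ℝ) ^ 2 * esym 3 s x
      ≤ ((s.card : ℝ) - 1) * ((s.card : ℝ) - 2) * (∑ i ∈ s, x i) ^ 3 := by
  rcases eq_or_lt_of_le hm with h3 | h4
  · -- card = 3 : AM-GM
    have hcard : s.card = 3 := h3.symm
    have hsing : s.powersetCard 3 = {s} := by
      conv_lhs => rw [← hcard]
      exact Finset.powersetCard_self s
    have he : esym 3 s x = ∏ i ∈ s, x i := by
      rw [esym, hsing, Finset.sum_singleton]
    obtain ⟨p, q, r, hpq, hpr, hqr, rfl⟩ := Finset.card_eq_three.1 hcard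
    have hxp := hx p (by simp)
    have hxq := hx q (by simp)
    have hxr := hx r (by simp)
    rw [he, hcard]
    rw [Finset.prod_insert (by simp [hpq, hpr]), Finset.prod_insert (by simp [hqr]),
      Finset.prod_singleton, Finset.sum_insert (by simp [hpq, hpr]),
      Finset.sum_insert (by simp [hqr]), Finset.sum_singleton]
    have := amgm3 hxp hxq hxr
    push_cast
    nlinarith [this]
  · -- card ≥ 4 : tangent line trick
    set m : ℝ := (s.card : ℝ) with hmdef
    have hm4' : 4 ≤ s.card := h4
    have hm4 : (4 : ℝ) ≤ m := by rw [hmdef]; exact_mod_cast hm4'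
    set S : ℝ := ∑ i ∈ s, x i with hSdef
    set Q : ℝ := ∑ i ∈ s, (x i) ^ 2 with hQdef
    set C : ℝ := ∑ i ∈ s, (x i) ^ 3 with hCdef
    have hS0 : 0 ≤ S := Finset.sum_nonneg hx
    have hyS : ∀ i ∈ s, x i ≤ S := fun i hi =>
      Finset.single_le_sum hx hi
    -- pointwise tangent inequality
    have hpt : ∀ i ∈ s,
        m * (3 * m - 2) * S ^ 3 + 6 * S ^ 2 * m * (m - 1) * (m * x i - S)
          ≤ m ^ 4 * (3 * S * (x i) ^ 2 - 2 * (x i) ^ 3) := by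
      intro i hi
      have hy0 := hx i hi
      have hyS' := hyS i hi
      have hm0 : (0 : ℝ) < m := by linarith
      have hid : m ^ 4 * (3 * S * (x i) ^ 2 - 2 * (x i) ^ 3)
          - (m * (3 * m - 2) * S ^ 3 + 6 * S ^ 2 * m * (m - 1) * (m * x i - S))
          = m * (m * x i - S) ^ 2 * ((3 * m - 4) * S - 2 * m * x i) := by ring
      have hfac : 0 ≤ m * (m * x i - S) ^ 2 * ((3 * m - 4) * S - 2 * m * x i) := by
        apply mul_nonneg (mul_nonneg hm0.le (sq_nonneg _))
        nlinarith
      linarith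
    have hsum := Finset.sum_le_sum hpt
    have hL : ∑ i ∈ s, (m * (3 * m - 2) * S ^ 3 + 6 * S ^ 2 * m * (m - 1) * (m * x i - S))
        = m ^ 2 * (3 * m - 2) * S ^ 3 := by
      rw [Finset.sum_add_distrib, Finset.sum_const, nsmul_eq_mul]
      have h1 : ∑ i ∈ s, 6 * S ^ 2 * m * (m - 1) * (m * x i - S)
          = 6 * S ^ 2 * m * (m - 1) * (m * S - m * S) := by
        rw [← Finset.mul_sum]
        congr 1
        rw [Finset.sum_sub_distrib, ← Finset.mul_sum, ← hSdef, Finset.sum_const, nsmul_eq_mul,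
          ← hmdef]
      rw [h1, ← hmdef]
      ring
    have hR : ∑ i ∈ s, m ^ 4 * (3 * S * (x i) ^ 2 - 2 * (x i) ^ 3)
        = m ^ 4 * (3 * S * Q - 2 * C) := by
      rw [← Finset.mul_sum]
      congr 1
      rw [Finset.sum_sub_distrib, ← Finset.mul_sum, ← Finset.mul_sum, ← hQdef, ← hCdef]
      try ring
    rw [hL, hR] at hsum
    -- cancel m^2
    have hm2 : (0 : ℝ) < m ^ 2 := by positivity
    have hcanc : (3 * m - 2) * S ^ 3 ≤ m ^ 2 * (3 * S * Q - 2 * C) := by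
      have h' : m ^ 2 * ((3 * m - 2) * S ^ 3) ≤ m ^ 2 * (m ^ 2 * (3 * S * Q - 2 * C)) := by
        nlinarith [hsum]
      exact le_of_mul_le_mul_left h' hm2
    have he3 := esym_three_eq s x
    rw [← hSdef, ← hQdef, ← hCdef] at he3
    nlinarith [hcanc, he3]

end KminusAux

namespace KminusAux

lemma cast_choose_three (n : ℕ) :
    ((n.choose 3 : ℕ) : ℝ) = (n : ℝ) * ((n : ℝ) - 1) * ((n : ℝ) - 2) / 6 := by
  induction n with
  | zero => simp
  | succ n ih =>
    rw [Nat.choose_succ_succ, Nat.cast_add, ih, Nat.cast_choose_two]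
    push_cast
    ring

lemma esym_card_three {s : Finset ι} (x : ι → ℝ) (h : s.card = 3) :
    esym 3 s x = ∏ i ∈ s, x i := by
  rw [esym, ← h, Finset.powersetCard_self, Finset.sum_singleton]

lemma card_filter_lt (n k : ℕ) (h : k ≤ n) :
    ((Finset.univ : Finset (Fin n)).filter (fun i => i.val < k)).card = k := by
  have heq : ((Finset.univ : Finset (Fin n)).filter (fun i => i.val < k))
      = (Finset.range k).attachFin (fun m hm => lt_of_lt_of_le (Finset.mem_range.1 hm) h) := by
    ext i
    simp [Finset.mem_attachFin, Finset.mem_range]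
  rw [heq, Finset.card_attachFin, Finset.card_range]

end KminusAux

open KminusAux

/-- The Lagrangian polynomial of a hypergraph `H` on vertex set `V`. -/
def lagPoly {V : Type*} [DecidableEq V] (H : Finset (Finset V)) (x : V → ℝ) : ℝ :=
  ∑ E ∈ H, ∏ i ∈ E, x i

/-- The set of values of the Lagrangian polynomial over the standard simplex;
the Lagrangian of `H` is the greatest element of this set. -/
def lagValues {V : Type*} [Fintype V] [DecidableEq V] (H : Finset (Finset V)) : Set ℝ :=
  lagPoly H '' stdSimplex ℝ V

/-- `K_{3(t+1)}^{3-}`: the complete 3-graph on `3t+3` vertices minus the single edge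
consisting of the last three vertices. -/
def Kminus (t : ℕ) : Finset (Finset (Fin (3 * t + 3))) :=
  (Finset.univ.powersetCard 3).erase (Finset.univ.filter (fun i => 3 * t ≤ i.val))

set_option maxHeartbeats 1000000 in
/-- For every positive integer `t`, with `a = 2/(3t + 3 + √(9t² + 18t - 3))` and
`b = 1/3 - t·a`, one has `3·λ(K_{3(t+1)}^{3-}) = C(3t-1, 2)·a² + 3b² + 3(3t-1)·ab`. -/
theorem Kminus_degree_identity (t : ℕ) (ht : 1 ≤ t) (L : ℝ)
    (hL : IsGreatest (lagValues (Kminus t)) L) :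
    let a : ℝ := 2 / (3 * t + 3 + Real.sqrt (9 * (t : ℝ) ^ 2 + 18 * t - 3))
    let b : ℝ := 1 / 3 - t * a
    3 * L = ((3 * t - 1).choose 2 : ℝ) * a ^ 2 + 3 * b ^ 2 + 3 * (3 * (t : ℝ) - 1) * a * b := by
  intro a b
  have ht1 : (1 : ℝ) ≤ (t : ℝ) := by exact_mod_cast ht
  -- properties of a
  have hR0 : (0 : ℝ) ≤ 9 * (t : ℝ) ^ 2 + 18 * t - 3 := by nlinarith
  have hsq : Real.sqrt (9 * (t : ℝ) ^ 2 + 18 * t - 3) ^ 2 = 9 * (t : ℝ) ^ 2 + 18 * t - 3 :=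
    Real.sq_sqrt hR0
  have hsqnn : 0 ≤ Real.sqrt (9 * (t : ℝ) ^ 2 + 18 * t - 3) := Real.sqrt_nonneg _
  have hD : (0 : ℝ) < 3 * t + 3 + Real.sqrt (9 * (t : ℝ) ^ 2 + 18 * t - 3) := by linarith
  have hadef : a = 2 / (3 * t + 3 + Real.sqrt (9 * (t : ℝ) ^ 2 + 18 * t - 3)) := rfl
  have hbdef : b = 1 / 3 - t * a := rfl
  have ha0 : 0 < a := by rw [hadef]; positivity
  clear_value a b
  have ha : 3 * a ^ 2 - (3 * (t : ℝ) + 3) * a + 1 = 0 := by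
    rw [hadef]
    field_simp
    nlinarith [hsq, Real.sq_sqrt (show (0:ℝ) ≤ t * (t * 9 + 18) - 3 by nlinarith)]
  have hsqge : (3 * (t : ℝ) - 3) ≤ Real.sqrt (9 * (t : ℝ) ^ 2 + 18 * t - 3) := by
    nlinarith [hsq, hsqnn]
  have hta : (t : ℝ) * a ≤ 1 / 3 := by
    have h2t : (t : ℝ) * a = 2 * t / (3 * t + 3 + Real.sqrt (9 * (t : ℝ) ^ 2 + 18 * t - 3)) := by
      rw [hadef]; ring
    rw [h2t, div_le_iff₀ hD]
    nlinarith
  have ha13 : a ≤ 1 / 3 := by nlinarith [hta, ha0]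
  have hb' : b = a - a ^ 2 := by rw [hbdef]; linear_combination (1 / 3) * ha
  have hb0 : 0 ≤ a - a ^ 2 := by nlinarith
  -- the blocks
  set A : Finset (Fin (3 * t + 3)) := Finset.univ.filter (fun i => i.val < 3 * t) with hA
  set B : Finset (Fin (3 * t + 3)) := Finset.univ.filter (fun i => 3 * t ≤ i.val) with hB
  have cardA : A.card = 3 * t := card_filter_lt (3 * t + 3) (3 * t) (by omega)
  have cardB : B.card = 3 := by
    have hneg : B = Finset.univ.filter (fun i : Fin (3 * t + 3) => ¬ i.val < 3 * t) := by
      rw [hB]; ext i; simp [not_lt]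
    have hadd := Finset.card_filter_add_card_filter_not
      (s := (Finset.univ : Finset (Fin (3 * t + 3)))) (p := fun i => i.val < 3 * t)
    rw [← hA, ← hneg] at hadd
    have hu : (Finset.univ : Finset (Fin (3 * t + 3))).card = 3 * t + 3 := by
      simp
    omega
  have hdisj : Disjoint A B := by
    rw [Finset.disjoint_left]
    intro i hi hi'
    rw [hA, Finset.mem_filter] at hi
    rw [hB, Finset.mem_filter] at hi'
    omega
  have hunion : A ∪ B = Finset.univ := by
    ext i
    simp only [Finset.mem_union, hA, hB, Finset.mem_filter, Finset.mem_univ, true_and,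
      iff_true]
    omega
  have hBmem : B ∈ (Finset.univ : Finset (Fin (3 * t + 3))).powersetCard 3 :=
    Finset.mem_powersetCard.2 ⟨Finset.subset_univ _, cardB⟩
  -- decomposition of the Lagrangian polynomial
  have hlag : ∀ x : Fin (3 * t + 3) → ℝ, lagPoly (Kminus t) x
      = esym 3 A x + esym 2 A x * (∑ i ∈ B, x i) + (∑ i ∈ A, x i) * esym 2 B x := by
    intro x
    have h1 : lagPoly (Kminus t) x = esym 3 Finset.univ x - ∏ i ∈ B, x i := by
      rw [lagPoly, Kminus, ← hB, Finset.sum_erase_eq_sub hBmem, esym]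
    have h2 : esym 3 Finset.univ x = esym 3 A x + esym 2 A x * esym 1 B x
        + esym 1 A x * esym 2 B x + esym 3 B x := by
      rw [← hunion]
      exact esym_three_union A x B hdisj
    have h3 : esym 3 B x = ∏ i ∈ B, x i := esym_card_three x cardB
    rw [h1, h2, h3, esym_one, esym_one]
    ring
  -- the optimal value
  set lam : ℝ := 3 * (t : ℝ) * (3 * (t : ℝ) - 1) * (3 * (t : ℝ) - 2) / 6 * a ^ 3
      + 3 * (t : ℝ) * (3 * (t : ℝ) - 1) / 2 * a ^ 2 * (3 * (a - a ^ 2))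
      + 3 * (t : ℝ) * a * (3 * (a - a ^ 2) ^ 2) with hlamdef
  clear_value lam
  -- upper bound
  have hup : ∀ x ∈ stdSimplex ℝ (Fin (3 * t + 3)), lagPoly (Kminus t) x ≤ lam := by
    intro x hx
    obtain ⟨hx0, hx1⟩ := hx
    have hxa : ∀ i ∈ A, 0 ≤ x i := fun i _ => hx0 i
    have hSA0 : 0 ≤ ∑ i ∈ A, x i := Finset.sum_nonneg hxa
    have hsB0 : 0 ≤ ∑ i ∈ B, x i := Finset.sum_nonneg fun i _ => hx0 i
    have hsum1 : (∑ i ∈ A, x i) + (∑ i ∈ B, x i) = 1 := by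
      rw [← Finset.sum_union hdisj, hunion]
      exact hx1
    have hSAe : (∑ i ∈ A, x i) = 1 - ∑ i ∈ B, x i := by linarith
    have hcA3 : 3 ≤ A.card := by rw [cardA]; omega
    have h1 := esym_three_le A x hcA3 hxa
    have h2 := esym_two_le A x
    have h3 := esym_two_eq B x
    have h4 : (∑ i ∈ B, x i) ^ 2 ≤ (B.card : ℝ) * ∑ i ∈ B, (x i) ^ 2 :=
      sq_sum_le_card_mul_sum_sq
    rw [cardA] at h1 h2
    rw [cardB] at h4
    push_cast at h1 h2 h4
    rw [hSAe] at h1 h2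
    have h5 : 3 * esym 2 B x ≤ (∑ i ∈ B, x i) ^ 2 := by linarith
    have hq0 : 0 ≤ (∑ i ∈ B, x i) + ((9 * (t : ℝ) ^ 2 + 9 * t - 2) / 2 - 6 * t * a) := by
      nlinarith [hta, ht1, hsB0]
    have hkey : 6 * (3 * (t : ℝ)) ^ 2 * lam
        - ((3 * (t : ℝ) - 1) * (3 * (t : ℝ) - 2) * (1 - ∑ i ∈ B, x i) ^ 3
          + 3 * (3 * (t : ℝ)) * (3 * (t : ℝ) - 1) * (∑ i ∈ B, x i) * (1 - ∑ i ∈ B, x i) ^ 2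
          + 2 * (3 * (t : ℝ)) ^ 2 * (1 - ∑ i ∈ B, x i) * (∑ i ∈ B, x i) ^ 2)
        = 2 * ((∑ i ∈ B, x i) - 3 * (a - a ^ 2)) ^ 2
          * ((∑ i ∈ B, x i) + ((9 * (t : ℝ) ^ 2 + 9 * t - 2) / 2 - 6 * t * a)) := by
      rw [hlamdef]
      linear_combination (-2 + 6 * (∑ i ∈ B, x i) - 4 * (∑ i ∈ B, x i) ^ 2 - 6 * a
        + 6 * a * (∑ i ∈ B, x i) + 6 * a ^ 2 - 6 * a ^ 2 * (∑ i ∈ B, x i)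
        + 9 * (t : ℝ) - 18 * (t : ℝ) * (∑ i ∈ B, x i) + 21 * (t : ℝ) * a
        + 18 * (t : ℝ) * a * (∑ i ∈ B, x i) - 63 * (t : ℝ) * a ^ 2 + 36 * (t : ℝ) * a ^ 3
        - 9 * (t : ℝ) ^ 2 + 9 * (t : ℝ) ^ 2 * a ^ 2 - 27 * (t : ℝ) ^ 3 * a
        - 81 * (t : ℝ) ^ 3 * a ^ 2 + 162 * (t : ℝ) ^ 3 * a ^ 3
        - 81 * (t : ℝ) ^ 4 * a ^ 2) * ha
    have hprod : 0 ≤ 2 * ((∑ i ∈ B, x i) - 3 * (a - a ^ 2)) ^ 2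
        * ((∑ i ∈ B, x i) + ((9 * (t : ℝ) ^ 2 + 9 * t - 2) / 2 - 6 * t * a)) := by
      apply mul_nonneg (by positivity) hq0
    have hmul2 := mul_le_mul_of_nonneg_left h2
      (show (0 : ℝ) ≤ 3 * (3 * (t : ℝ)) * (∑ i ∈ B, x i) by positivity)
    have hmul5 := mul_le_mul_of_nonneg_left h5
      (show (0 : ℝ) ≤ 2 * (3 * (t : ℝ)) ^ 2 * (1 - ∑ i ∈ B, x i) by
        have : 0 ≤ 1 - ∑ i ∈ B, x i := by linarith
        positivity)
    have hscaled : (6 * (3 * (t : ℝ)) ^ 2) * lagPoly (Kminus t) x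
        ≤ (6 * (3 * (t : ℝ)) ^ 2) * lam := by
      rw [hlag x, hSAe]
      linarith [h1, hmul2, hmul5, hkey, hprod]
    have hpos : (0 : ℝ) < 6 * (3 * (t : ℝ)) ^ 2 := by positivity
    exact le_of_mul_le_mul_left hscaled hpos
  -- lower bound : the optimal vector
  have hlow : lam ∈ lagValues (Kminus t) := by
    set y : Fin (3 * t + 3) → ℝ := fun i => if 3 * t ≤ i.val then a - a ^ 2 else a with hy
    have hxA : ∀ i ∈ A, y i = a := by
      intro i hi
      rw [hA, Finset.mem_filter] at hi
      simp only [hy]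
      exact if_neg (by omega)
    have hxB : ∀ i ∈ B, y i = a - a ^ 2 := by
      intro i hi
      rw [hB, Finset.mem_filter] at hi
      simp only [hy]
      exact if_pos hi.2
    have hsa : ∑ i ∈ A, y i = 3 * (t : ℝ) * a := by
      rw [Finset.sum_congr rfl hxA, Finset.sum_const, cardA, nsmul_eq_mul]
      push_cast
      ring
    have hsb : ∑ i ∈ B, y i = 3 * (a - a ^ 2) := by
      rw [Finset.sum_congr rfl hxB, Finset.sum_const, cardB, nsmul_eq_mul]
      norm_num
    refine ⟨y, ⟨?_, ?_⟩, ?_⟩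
    · intro i
      simp only [hy]
      split
      · exact hb0
      · exact ha0.le
    · rw [show (∑ i, y i) = ∑ i ∈ A ∪ B, y i by rw [hunion], Finset.sum_union hdisj, hsa, hsb]
      linear_combination (-1 : ℝ) * ha
    · rw [hlag y, esym_const 3 A y a hxA, esym_const 2 A y a hxA,
        esym_const 2 B y (a - a ^ 2) hxB, hsa, hsb, cardA, cardB,
        cast_choose_three, Nat.cast_choose_two, Nat.cast_choose_two, hlamdef]
      push_cast
      ring
  -- identify L
  obtain ⟨⟨x0, hx0mem, hx0val⟩, hmax⟩ := hL
  have hLlam : L = lam := le_antisymm (hx0val ▸ hup x0 hx0mem) (hmax hlow)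
  -- the final identity
  have hch : (((3 * t - 1).choose 2 : ℕ) : ℝ) = (3 * (t : ℝ) - 1) * (3 * (t : ℝ) - 2) / 2 := by
    rw [Nat.cast_choose_two]
    have hc : ((3 * t - 1 : ℕ) : ℝ) = 3 * (t : ℝ) - 1 := by
      have : (1 : ℕ) ≤ 3 * t := by omega
      push_cast [this]
      ring
    rw [hc]
    ring
  rw [hLlam, hb', hch, hlamdef]
  linear_combination (-a ^ 2 - (9 / 2) * (t : ℝ) * a ^ 2 + 9 * (t : ℝ) * a ^ 3
    - (9 / 2) * (t : ℝ) ^ 2 * a ^ 2) * ha
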